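/- Let n ≥ 2, m₀ > 0, and let ℓ : ℝⁿ \ {0} → ℝ be continuous, positively homogeneous of degree m₀ with ℓ ≥ c₀|ξ|^{m₀}, c₀ > 0. Let a : ℝⁿ \ {0} → ℂ be continuous and positively homogeneous of degree -n, and let η : (0,∞) → ℂ be bounded measurable with compact support in (0,∞). Then there exists t₀ > 0 such that for all 0 < t < t₀, ∫_{|ξ| ≥ 1} a(ξ) η(t ℓ(ξ)) dξ = (1/m₀) (∫_{𝕊^{n-1}} a dς) (∫_0^∞ η(u) du/u). In particular the left-hand side is constant in t for small t > 0. -/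

import Mathlib

open MeasureTheory Set Metric

theorem aux_subst (η : ℝ → ℂ) (m₀ c : ℝ) (hm₀ : 0 < m₀) (hc : 0 < c) :
    ∫ s in Ioi (0:ℝ), (s⁻¹ : ℝ) • η (c * s ^ m₀)
      = (m₀⁻¹ : ℝ) • ∫ u in Ioi (0:ℝ), (u⁻¹ : ℝ) • η u := by
  have h1 : ∫ s in Ioi (0:ℝ), (s⁻¹ : ℝ) • η (c * s ^ m₀)
      = ∫ y in Ioi (0:ℝ), ((m₀⁻¹ * y⁻¹ : ℝ)) • η (c * y) := by
    rw [← integral_comp_rpow_Ioi_of_pos (g := fun y => (m₀⁻¹ * y⁻¹ : ℝ) • η (c * y)) hm₀]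
    refine setIntegral_congr_fun measurableSet_Ioi fun s hs => ?_
    have hs0 : (0:ℝ) < s := hs
    rw [smul_smul]
    congr 1
    have h2 : s ^ (m₀ - 1) * s ^ (-m₀) = s⁻¹ := by
      rw [← Real.rpow_add hs0, show m₀ - 1 + -m₀ = -1 by ring, Real.rpow_neg_one]
    calc s⁻¹ = (m₀ * m₀⁻¹) * (s ^ (m₀ - 1) * s ^ (-m₀)) := by
          rw [mul_inv_cancel₀ hm₀.ne', h2, one_mul]
      _ = m₀ * s ^ (m₀ - 1) * (m₀⁻¹ * (s ^ m₀)⁻¹) := by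
          rw [← Real.rpow_neg hs0.le]; ring
  have h3 : ∫ y in Ioi (0:ℝ), (y⁻¹ : ℝ) • η (c * y) = ∫ u in Ioi (0:ℝ), (u⁻¹ : ℝ) • η u := by
    have h := integral_comp_mul_left_Ioi (fun u => (u⁻¹ : ℝ) • η u) 0 hc
    rw [mul_zero] at h
    have hcong : ∀ y ∈ Ioi (0:ℝ), (y⁻¹ : ℝ) • η (c * y)
        = c • (((c * y)⁻¹ : ℝ) • η (c * y)) := by
      intro y hy
      rw [smul_smul, mul_inv, mul_inv_cancel_left₀ hc.ne']
    rw [setIntegral_congr_fun measurableSet_Ioi hcong, integral_smul, h, smul_smul,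
      mul_inv_cancel₀ hc.ne', one_smul]
  rw [h1]
  simp_rw [mul_smul]
  rw [integral_smul, h3]

/-- for `a` homogeneous of degree `-n`, `ℓ` homogeneous elliptic of degree
`m₀`, and `η` bounded with compact support in `(0,∞)`, for all sufficiently small `t > 0`,
`∫_{|ξ|≥1} a(ξ) η(t ℓ(ξ)) dξ = (1/m₀)(∫_{𝕊^{n-1}} a dς)(∫_0^∞ η(u) du/u)`. -/
theorem stmt17 {n : ℕ} (hn : 2 ≤ n) (m₀ c₀ : ℝ) (hm₀ : 0 < m₀) (hc₀ : 0 < c₀)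
    (ℓ : EuclideanSpace ℝ (Fin n) → ℝ) (hℓc : ContinuousOn ℓ {0}ᶜ)
    (hℓhom : ∀ r : ℝ, 0 < r → ∀ ξ : EuclideanSpace ℝ (Fin n), ξ ≠ 0 →
      ℓ (r • ξ) = r ^ m₀ * ℓ ξ)
    (hell : ∀ ξ : EuclideanSpace ℝ (Fin n), ξ ≠ 0 → c₀ * ‖ξ‖ ^ m₀ ≤ ℓ ξ)
    (a : EuclideanSpace ℝ (Fin n) → ℂ) (hac : ContinuousOn a {0}ᶜ)
    (hahom : ∀ r : ℝ, 0 < r → ∀ ξ : EuclideanSpace ℝ (Fin n), ξ ≠ 0 →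
      a (r • ξ) = ((r ^ (-(n : ℝ)) : ℝ) : ℂ) * a ξ)
    (η : ℝ → ℂ) (hηm : Measurable η) (M : ℝ) (hηb : ∀ u, ‖η u‖ ≤ M)
    (K : Set ℝ) (hK : IsCompact K) (hKpos : K ⊆ Set.Ioi 0)
    (hηsupp : ∀ u ∉ K, η u = 0) :
    ∃ t₀ > (0 : ℝ), ∀ t : ℝ, 0 < t → t < t₀ →
      ∫ ξ in {ξ : EuclideanSpace ℝ (Fin n) | 1 ≤ ‖ξ‖}, a ξ * η (t * ℓ ξ)
        = (1 / m₀ : ℂ)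
          * (∫ ω, a (ω : EuclideanSpace ℝ (Fin n))
              ∂((volume : Measure (EuclideanSpace ℝ (Fin n))).toSphere))
          * ∫ u in Set.Ioi (0 : ℝ), η u * (u : ℂ)⁻¹ := by
  classical
  have hM0 : 0 ≤ M := le_trans (norm_nonneg _) (hηb 0)
  by_cases hKe : K.Nonempty
  swap
  · refine ⟨1, one_pos, fun t ht _ => ?_⟩
    have hη0 : ∀ u, η u = 0 := fun u => hηsupp u (fun hu => hKe ⟨u, hu⟩)
    simp [hη0]
  haveI : Nonempty (Fin n) := ⟨⟨0, by omega⟩⟩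
  haveI : Nontrivial (EuclideanSpace ℝ (Fin n)) := inferInstance
  have hdim : Module.finrank ℝ (EuclideanSpace ℝ (Fin n)) = n := finrank_euclideanSpace_fin
  set δ := sInf K with hδdef
  have hδK : δ ∈ K := hK.sInf_mem hKe
  have hδpos : 0 < δ := hKpos hδK
  have hδle : ∀ u ∈ K, δ ≤ u := fun u hu => csInf_le hK.bddBelow hu
  obtain ⟨R, hRub⟩ := hK.bddAbove
  have hR : ∀ u ∈ K, u ≤ R := fun u hu => hRub hu
  have hsub : Metric.sphere (0 : EuclideanSpace ℝ (Fin n)) 1 ⊆ {0}ᶜ := fun x hx =>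
    ne_of_mem_sphere hx one_ne_zero
  have hsphne : (Metric.sphere (0 : EuclideanSpace ℝ (Fin n)) 1).Nonempty :=
    NormedSpace.sphere_nonempty.mpr zero_le_one
  obtain ⟨ω₀, hω₀mem, hω₀max⟩ :=
    (isCompact_sphere (0 : EuclideanSpace ℝ (Fin n)) 1).exists_isMaxOn hsphne (hℓc.mono hsub)
  set C := ℓ ω₀ with hCdef
  have hωnorm : ∀ ω ∈ Metric.sphere (0 : EuclideanSpace ℝ (Fin n)) 1, ‖ω‖ = 1 :=
    fun ω hω => mem_sphere_zero_iff_norm.mp hω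
  have hℓlb : ∀ ω ∈ Metric.sphere (0 : EuclideanSpace ℝ (Fin n)) 1, c₀ ≤ ℓ ω := by
    intro ω hω
    have := hell ω (hsub hω)
    rwa [hωnorm ω hω, Real.one_rpow, mul_one] at this
  have hCpos : 0 < C := lt_of_lt_of_le hc₀ (hℓlb ω₀ hω₀mem)
  have hℓub : ∀ ω ∈ Metric.sphere (0 : EuclideanSpace ℝ (Fin n)) 1, ℓ ω ≤ C :=
    fun ω hω => hω₀max hω
  obtain ⟨A₀, hA₀⟩ :=
    (isCompact_sphere (0 : EuclideanSpace ℝ (Fin n)) 1).exists_bound_of_continuousOn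
      (hac.mono hsub)
  set A := max A₀ 0 with hAdef
  have hA : ∀ ω ∈ Metric.sphere (0 : EuclideanSpace ℝ (Fin n)) 1, ‖a ω‖ ≤ A :=
    fun ω hω => (hA₀ ω hω).trans (le_max_left _ _)
  have hA0 : 0 ≤ A := le_max_right _ _
  refine ⟨δ / C, div_pos hδpos hCpos, fun t ht htlt => ?_⟩
  have htC : t * C < δ := (lt_div_iff₀ hCpos).mp htlt
  set S : Set (EuclideanSpace ℝ (Fin n)) := {ξ | 1 ≤ ‖ξ‖} with hSdef
  have hSmeas : MeasurableSet S := (isClosed_le continuous_const continuous_norm).measurableSet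
  have hS0 : S ⊆ {0}ᶜ := by
    intro ξ hξ
    simp only [Set.mem_compl_iff, Set.mem_singleton_iff]
    rintro rfl
    simp only [hSdef, Set.mem_setOf_eq, norm_zero] at hξ
    linarith
  set F : EuclideanSpace ℝ (Fin n) → ℂ :=
    S.indicator (fun ξ => a ξ * η (t * ℓ ξ)) with hFdef
  set G : Metric.sphere (0 : EuclideanSpace ℝ (Fin n)) 1 × Set.Ioi (0:ℝ) → ℂ :=
    fun p => F ((p.2 : ℝ) • (p.1 : EuclideanSpace ℝ (Fin n))) with hGdef
  set ς := (volume : Measure (EuclideanSpace ℝ (Fin n))).toSphere with hςdef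
  set ν := Measure.volumeIoiPow (n - 1) with hνdef
  have hmp : MeasurePreserving (homeomorphUnitSphereProd (EuclideanSpace ℝ (Fin n)))
      ((volume : Measure (EuclideanSpace ℝ (Fin n))).comap Subtype.val) (ς.prod ν) := by
    have := (volume : Measure (EuclideanSpace ℝ (Fin n))).measurePreserving_homeomorphUnitSphereProd
    rwa [hdim] at this
  -- measurability of F
  have hFm : AEStronglyMeasurable F (volume : Measure (EuclideanSpace ℝ (Fin n))) := by
    rw [hFdef, aestronglyMeasurable_indicator_iff hSmeas]
    refine AEStronglyMeasurable.mul ((hac.mono hS0).aestronglyMeasurable hSmeas) ?_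
    have hℓae : AEMeasurable ℓ (volume.restrict S) := (hℓc.mono hS0).aemeasurable hSmeas
    exact (hηm.comp_aemeasurable (hℓae.const_mul t)).aestronglyMeasurable
  -- measurability of G
  have hφ : Measurable (fun p : Metric.sphere (0 : EuclideanSpace ℝ (Fin n)) 1 × Set.Ioi (0:ℝ) =>
      (p.2 : ℝ) • (p.1 : EuclideanSpace ℝ (Fin n))) :=
    (measurable_subtype_coe.comp measurable_snd).smul (measurable_subtype_coe.comp measurable_fst)
  have hGm : AEStronglyMeasurable G (ς.prod ν) := by
    have h2 : MeasurePreserving (homeomorphUnitSphereProd (EuclideanSpace ℝ (Fin n))).symm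
        (ς.prod ν) (volume.comap Subtype.val) :=
      hmp.symm (homeomorphUnitSphereProd (EuclideanSpace ℝ (Fin n))).toMeasurableEquiv
    have hmap : (ς.prod ν).map (fun p : Metric.sphere (0 : EuclideanSpace ℝ (Fin n)) 1
          × Set.Ioi (0:ℝ) => (p.2 : ℝ) • (p.1 : EuclideanSpace ℝ (Fin n)))
        = (volume : Measure (EuclideanSpace ℝ (Fin n))).restrict {0}ᶜ := by
      calc (ς.prod ν).map (fun p : Metric.sphere (0 : EuclideanSpace ℝ (Fin n)) 1
              × Set.Ioi (0:ℝ) => (p.2 : ℝ) • (p.1 : EuclideanSpace ℝ (Fin n)))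
          = ((ς.prod ν).map (homeomorphUnitSphereProd (EuclideanSpace ℝ (Fin n))).symm).map
              Subtype.val := by
            rw [Measure.map_map measurable_subtype_coe
              (homeomorphUnitSphereProd (EuclideanSpace ℝ (Fin n))).symm.measurable]
            rfl
        _ = ((volume : Measure (EuclideanSpace ℝ (Fin n))).comap Subtype.val).map Subtype.val := by
            rw [h2.map_eq]
        _ = (volume : Measure (EuclideanSpace ℝ (Fin n))).restrict {0}ᶜ := by
            rw [(MeasurableEmbedding.subtype_coe
              (measurableSet_singleton (0 : EuclideanSpace ℝ (Fin n))).compl).map_comap,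
              Subtype.range_coe]
    have hF' : AEStronglyMeasurable F ((ς.prod ν).map
        (fun p : Metric.sphere (0 : EuclideanSpace ℝ (Fin n)) 1 × Set.Ioi (0:ℝ) =>
          (p.2 : ℝ) • (p.1 : EuclideanSpace ℝ (Fin n)))) := by
      rw [hmap, restrict_compl_singleton]
      exact hFm
    exact hF'.comp_measurable hφ
  -- integrability of G
  set B := (R / (t * c₀)) ^ (1/m₀ : ℝ) with hBdef
  set T : Set (Set.Ioi (0:ℝ)) := Subtype.val ⁻¹' (Set.Iic B) with hTdef
  have hTmeas : MeasurableSet T := measurable_subtype_coe measurableSet_Iic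
  have hGint : Integrable G (ς.prod ν) := by
    have hνT : ν T < ⊤ := by
      have hsubT : T ⊆ Set.Iio (⟨max B 0 + 1, by
          simp only [Set.mem_Ioi]; positivity⟩ : Set.Ioi (0:ℝ)) := by
        intro r hr
        have hr' : (r:ℝ) ≤ B := hr
        show r < _
        rw [← Subtype.coe_lt_coe]
        have : B ≤ max B 0 := le_max_left _ _
        simp only []
        linarith
      calc ν T ≤ ν (Set.Iio _) := measure_mono hsubT
        _ < ⊤ := by
            rw [hνdef, Measure.volumeIoiPow_apply_Iio]
            exact ENNReal.ofReal_lt_top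
    have hbound : ∀ p : Metric.sphere (0 : EuclideanSpace ℝ (Fin n)) 1 × Set.Ioi (0:ℝ),
        ‖G p‖ ≤ (Set.univ ×ˢ T).indicator (fun _ => A * M) p := by
      rintro ⟨ω, r⟩
      by_cases hGz : G (ω, r) = 0
      · rw [hGz, norm_zero]
        exact Set.indicator_nonneg (fun _ _ => mul_nonneg hA0 hM0) _
      have hmemS : (r : ℝ) • (ω : EuclideanSpace ℝ (Fin n)) ∈ S := by
        by_contra h
        exact hGz (Set.indicator_of_notMem h _)
      have hFv : G (ω, r) = a ((r:ℝ) • (ω : EuclideanSpace ℝ (Fin n)))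
          * η (t * ℓ ((r:ℝ) • (ω : EuclideanSpace ℝ (Fin n)))) := Set.indicator_of_mem hmemS _
      have hω0 : (ω : EuclideanSpace ℝ (Fin n)) ≠ 0 := ne_of_mem_sphere ω.2 one_ne_zero
      have hr0 : (0:ℝ) < r := r.2
      have hn1 : ‖(ω : EuclideanSpace ℝ (Fin n))‖ = 1 := mem_sphere_zero_iff_norm.mp ω.2
      have hns : ‖(r:ℝ) • (ω : EuclideanSpace ℝ (Fin n))‖ = r := by
        rw [norm_smul, hn1, mul_one, Real.norm_eq_abs, abs_of_pos hr0]
      have hr1 : (1:ℝ) ≤ r := by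
        have h' := hmemS
        rw [hSdef] at h'
        simp only [Set.mem_setOf_eq, hns] at h'
        exact h'
      have hηne : η (t * ℓ ((r:ℝ) • (ω : EuclideanSpace ℝ (Fin n)))) ≠ 0 := by
        intro h
        exact hGz (by rw [hFv, h, mul_zero])
      have hKmem : t * ℓ ((r:ℝ) • (ω : EuclideanSpace ℝ (Fin n))) ∈ K := by
        by_contra h
        exact hηne (hηsupp _ h)
      have hℓv : ℓ ((r:ℝ) • (ω : EuclideanSpace ℝ (Fin n))) = (r:ℝ) ^ m₀ * ℓ ω :=
        hℓhom r hr0 ω hω0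
      have hrm : (0:ℝ) ≤ (r:ℝ) ^ m₀ := Real.rpow_nonneg hr0.le _
      have hrB : (r:ℝ) ≤ B := by
        have h1 : t * ((r:ℝ) ^ m₀ * c₀) ≤ R := by
          calc t * ((r:ℝ)^m₀ * c₀) ≤ t * ℓ ((r:ℝ) • (ω : EuclideanSpace ℝ (Fin n))) := by
                rw [hℓv]
                exact mul_le_mul_of_nonneg_left
                  (mul_le_mul_of_nonneg_left (hℓlb ω ω.2) hrm) ht.le
            _ ≤ R := hR _ hKmem
        have h2 : (r:ℝ)^m₀ ≤ R / (t * c₀) := by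
          rw [le_div_iff₀ (mul_pos ht hc₀)]
          nlinarith
        calc (r:ℝ) = ((r:ℝ)^m₀) ^ (1/m₀ : ℝ) := by
              rw [← Real.rpow_mul hr0.le, mul_one_div_cancel hm₀.ne', Real.rpow_one]
          _ ≤ B := Real.rpow_le_rpow hrm h2 (by positivity)
      have hmemT : ((ω, r) : Metric.sphere (0 : EuclideanSpace ℝ (Fin n)) 1 × Set.Ioi (0:ℝ))
          ∈ (Set.univ ×ˢ T) := ⟨Set.mem_univ _, hrB⟩
      rw [Set.indicator_of_mem hmemT]
      have hav : a ((r:ℝ) • (ω : EuclideanSpace ℝ (Fin n)))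
          = (((r:ℝ) ^ (-(n:ℝ)) : ℝ) : ℂ) * a ω := hahom r hr0 ω hω0
      have h1 : ‖a ((r:ℝ) • (ω : EuclideanSpace ℝ (Fin n)))‖ ≤ A := by
        rw [hav, norm_mul, Complex.norm_real, Real.norm_eq_abs,
          abs_of_nonneg (Real.rpow_nonneg hr0.le _)]
        have hle1 : (r:ℝ) ^ (-(n:ℝ)) ≤ 1 :=
          Real.rpow_le_one_of_one_le_of_nonpos hr1 (neg_nonpos.mpr (Nat.cast_nonneg n))
        have hAω := hA ω ω.2
        nlinarith [norm_nonneg (a (ω : EuclideanSpace ℝ (Fin n)))]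
      calc ‖G (ω, r)‖
          = ‖a ((r:ℝ) • (ω : EuclideanSpace ℝ (Fin n)))‖
            * ‖η (t * ℓ ((r:ℝ) • (ω : EuclideanSpace ℝ (Fin n))))‖ := by rw [hFv, norm_mul]
        _ ≤ A * M := mul_le_mul h1 (hηb _) (norm_nonneg _) hA0
    have hdom : Integrable ((Set.univ ×ˢ T).indicator (fun _ => A * M) :
        Metric.sphere (0 : EuclideanSpace ℝ (Fin n)) 1 × Set.Ioi (0:ℝ) → ℝ) (ς.prod ν) := by
      rw [integrable_indicator_iff (MeasurableSet.univ.prod hTmeas)]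
      refine integrableOn_const (ne_of_lt ?_)
      calc (ς.prod ν) (Set.univ ×ˢ T) = ς Set.univ * ν T := Measure.prod_prod _ _
        _ < ⊤ := ENNReal.mul_lt_top (measure_lt_top ς _) hνT
    exact Integrable.mono' hdom hGm (Filter.Eventually.of_forall hbound)
  -- inner integral evaluation
  have key : ∀ ω : Metric.sphere (0 : EuclideanSpace ℝ (Fin n)) 1,
      (∫ r : Set.Ioi (0:ℝ), G (ω, r) ∂ν)
        = a ω * ((m₀⁻¹ : ℝ) • ∫ u in Ioi (0:ℝ), (u⁻¹ : ℝ) • η u) := by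
    intro ω
    have hω0 : (ω : EuclideanSpace ℝ (Fin n)) ≠ 0 := ne_of_mem_sphere ω.2 one_ne_zero
    have hn1 : ‖(ω : EuclideanSpace ℝ (Fin n))‖ = 1 := mem_sphere_zero_iff_norm.mp ω.2
    set L := ℓ (ω : EuclideanSpace ℝ (Fin n)) with hLdef
    have hc₀L : c₀ ≤ L := hℓlb ω ω.2
    have hLC : L ≤ C := hℓub ω ω.2
    have htL : 0 < t * L := mul_pos ht (lt_of_lt_of_le hc₀ hc₀L)
    have htLδ : t * L < δ := lt_of_le_of_lt (mul_le_mul_of_nonneg_left hLC ht.le) htC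
    have h5 : (∫ r : Set.Ioi (0:ℝ), G (ω, r) ∂ν)
        = ∫ s in Ioi (0:ℝ), (Real.toNNReal (s ^ (n-1)))
            • F (s • (ω : EuclideanSpace ℝ (Fin n))) := by
      rw [hνdef, Measure.volumeIoiPow]
      simp only [ENNReal.ofReal]
      rw [integral_withDensity_eq_integral_smul
        ((measurable_subtype_coe.pow_const _).real_toNNReal)]
      rw [← integral_subtype_comap measurableSet_Ioi
        (fun s : ℝ => (Real.toNNReal (s ^ (n-1))) • F (s • (ω : EuclideanSpace ℝ (Fin n))))]
    have h6 : (∫ s in Ioi (0:ℝ), (Real.toNNReal (s ^ (n-1)))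
            • F (s • (ω : EuclideanSpace ℝ (Fin n))))
        = ∫ s in Ioi (0:ℝ), a ω * ((s⁻¹ : ℝ) • η ((t * L) * s ^ m₀)) := by
      refine setIntegral_congr_fun measurableSet_Ioi fun s hs => ?_
      have hs0 : (0:ℝ) < s := hs
      have hsnorm : ‖s • (ω : EuclideanSpace ℝ (Fin n))‖ = s := by
        rw [norm_smul, hn1, mul_one, Real.norm_eq_abs, abs_of_pos hs0]
      rw [hFdef]
      by_cases hs1 : (1:ℝ) ≤ s
      · have hmem : s • (ω : EuclideanSpace ℝ (Fin n)) ∈ S := by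
          rw [hSdef]
          simp only [Set.mem_setOf_eq, hsnorm]
          exact hs1
        rw [Set.indicator_of_mem hmem]
        rw [hahom s hs0 ω hω0, hℓhom s hs0 ω hω0]
        rw [NNReal.smul_def, Real.coe_toNNReal _ (pow_nonneg hs0.le _)]
        rw [show t * (s ^ m₀ * L) = (t * L) * s ^ m₀ by ring]
        have hcoef : (s:ℝ) ^ (n-1) * s ^ (-(n:ℝ)) = s⁻¹ := by
          rw [← Real.rpow_natCast s (n-1), ← Real.rpow_add hs0,
            show ((n-1 : ℕ) : ℝ) + -(n:ℝ) = -1 by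
              rw [Nat.cast_sub (by omega)]; push_cast; ring,
            Real.rpow_neg_one]
        calc (s ^ (n-1) : ℝ) • ((((s:ℝ) ^ (-(n:ℝ)) : ℝ) : ℂ) * a ω * η ((t * L) * s ^ m₀))
            = (((s ^ (n-1) * s ^ (-(n:ℝ)) : ℝ)) : ℂ) * (a ω * η ((t * L) * s ^ m₀)) := by
              push_cast [Complex.real_smul]
              ring
          _ = a ω * ((s⁻¹ : ℝ) • η ((t * L) * s ^ m₀)) := by
              rw [hcoef, Complex.real_smul]
              push_cast
              ring
      · have hnm : s • (ω : EuclideanSpace ℝ (Fin n)) ∉ S := by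
          rw [hSdef]
          simp only [Set.mem_setOf_eq, hsnorm]
          exact hs1
        have hηz : η ((t * L) * s ^ m₀) = 0 := by
          apply hηsupp
          intro hmem
          have hge := hδle _ hmem
          have hs1' : s < 1 := not_le.mp hs1
          have hsm : s ^ m₀ < 1 := Real.rpow_lt_one hs0.le hs1' hm₀
          have hsm0 : (0:ℝ) ≤ s ^ m₀ := Real.rpow_nonneg hs0.le _
          nlinarith
        rw [Set.indicator_of_notMem hnm, hηz]
        simp
    rw [h5, h6, integral_const_mul, aux_subst η m₀ (t * L) hm₀ htL]
  -- final chain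
  calc ∫ ξ in S, a ξ * η (t * ℓ ξ)
      = ∫ ξ, F ξ := (integral_indicator hSmeas).symm
    _ = ∫ ξ in ({0}ᶜ : Set (EuclideanSpace ℝ (Fin n))), F ξ := by
        rw [restrict_compl_singleton]
    _ = ∫ x : (({0}ᶜ : Set (EuclideanSpace ℝ (Fin n)))), F x
          ∂((volume : Measure (EuclideanSpace ℝ (Fin n))).comap Subtype.val) :=
        (integral_subtype_comap (measurableSet_singleton 0).compl F).symm
    _ = ∫ p, G p ∂(ς.prod ν) := by
        rw [← hmp.integral_comp (Homeomorph.measurableEmbedding _) G]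
        refine integral_congr_ae (Filter.Eventually.of_forall fun x => ?_)
        have hx0 : (x : EuclideanSpace ℝ (Fin n)) ≠ 0 := x.2
        show F x.1 = F _
        congr 1
        simp only [homeomorphUnitSphereProd_apply_snd_coe,
          homeomorphUnitSphereProd_apply_fst_coe]
        rw [smul_inv_smul₀ (norm_ne_zero_iff.mpr hx0)]
    _ = ∫ ω, (∫ r : Set.Ioi (0:ℝ), G (ω, r) ∂ν) ∂ς := integral_prod G hGint
    _ = ∫ ω, a ω * ((m₀⁻¹ : ℝ) • ∫ u in Ioi (0:ℝ), (u⁻¹ : ℝ) • η u) ∂ς :=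
        integral_congr_ae (Filter.Eventually.of_forall key)
    _ = (∫ ω, a (ω : EuclideanSpace ℝ (Fin n)) ∂ς)
          * ((m₀⁻¹ : ℝ) • ∫ u in Ioi (0:ℝ), (u⁻¹ : ℝ) • η u) :=
        integral_mul_const _ _
    _ = (1 / m₀ : ℂ) * (∫ ω, a (ω : EuclideanSpace ℝ (Fin n)) ∂ς)
          * ∫ u in Set.Ioi (0 : ℝ), η u * (u : ℂ)⁻¹ := by
        have hη' : ∫ u in Ioi (0:ℝ), (u⁻¹ : ℝ) • η u
            = ∫ u in Ioi (0:ℝ), η u * (u : ℂ)⁻¹ :=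
          integral_congr_ae (Filter.Eventually.of_forall fun u => by
            show (u⁻¹ : ℝ) • η u = η u * (u : ℂ)⁻¹
            rw [Complex.real_smul, Complex.ofReal_inv, mul_comm])
        rw [hη', Complex.real_smul, Complex.ofReal_inv]
        ring
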